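/- Let f, g : [0,∞) × [0,∞) → ℝ be continuous, let h, l : [0,∞) → [0,∞) be continuously differentiable, and let H : [0,∞) → (0,∞) be continuous and locally Lipschitz with ∫_{0}^{∞} ds / H(s) = ∞. Suppose f(w,z)·h'(w)·l(z) + g(w,z)·h(w)·l'(z) ≤ H(h(w)·l(z)) for all w, z ≥ 0. If w, z : [0,T) → [0,∞) are differentiable with w' = f(w,z), z' = g(w,z) and w(0) = c₁ ≥ 0, z(0) = c₂ ≥ 0, then h(w(t))·l(z(t)) ≤ s(t) for all t ∈ [0,T), where s is the (global) solution of s' = H(s), s(0) = h(c₁)·l(c₂); in particular t ↦ h(w(t))·l(z(t)) is bounded on every bounded subinterval of [0,T). -/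

import Mathlib

open Set MeasureTheory Filter

/-- Theorem B, part (1), of the paper: if
`f(w,z) h'(w) l(z) + g(w,z) h(w) l'(z) ≤ H(h(w) l(z))` with `H > 0` and
`∫_0^∞ ds/H(s) = ∞`, then along any solution of `w' = f(w,z)`, `z' = g(w,z)` the
product `h(w(t)) l(z(t))` is dominated by the global solution of `s' = H(s)`,
`s(0) = h(c₁) l(c₂)`. -/
theorem sup_control_thmB_part1
    (f g : ℝ → ℝ → ℝ) (h l H : ℝ → ℝ) (c₁ c₂ T : ℝ)
    (hf_cont : Continuous fun p : ℝ × ℝ => f p.1 p.2)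
    (hg_cont : Continuous fun p : ℝ × ℝ => g p.1 p.2)
    (hh_diff : ContDiff ℝ 1 h) (hl_diff : ContDiff ℝ 1 l)
    (hh_nonneg : ∀ x, 0 ≤ x → 0 ≤ h x) (hl_nonneg : ∀ x, 0 ≤ x → 0 ≤ l x)
    (hH_cont : Continuous H) (hH_pos : ∀ x, 0 ≤ x → 0 < H x)
    (hH_lip : LocallyLipschitz H)
    (hH_div : ¬ IntegrableOn (fun x => 1 / H x) (Ici (0 : ℝ)))
    (hineq : ∀ x y : ℝ, 0 ≤ x → 0 ≤ y →
      f x y * deriv h x * l y + g x y * h x * deriv l y ≤ H (h x * l y))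
    (hc₁ : 0 ≤ c₁) (hc₂ : 0 ≤ c₂)
    (s : ℝ → ℝ)
    (hs0 : s 0 = h c₁ * l c₂)
    (hs' : ∀ t : ℝ, 0 ≤ t → HasDerivAt s (H (s t)) t)
    (w z : ℝ → ℝ)
    (hw0 : w 0 = c₁) (hz0 : z 0 = c₂)
    (hnn : ∀ t ∈ Ico (0 : ℝ) T, 0 ≤ w t ∧ 0 ≤ z t)
    (hw' : ∀ t ∈ Ico (0 : ℝ) T, HasDerivAt w (f (w t) (z t)) t)
    (hz' : ∀ t ∈ Ico (0 : ℝ) T, HasDerivAt z (g (w t) (z t)) t) :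
    ∀ t ∈ Ico (0 : ℝ) T, h (w t) * l (z t) ≤ s t := by
  intro t ht
  obtain ⟨ht0, htT⟩ := ht
  -- the truncated `H`
  set Ht : ℝ → ℝ := fun y => H (max y 0) with hHt_def
  have hHt_cont : Continuous Ht := hH_cont.comp (continuous_id.max continuous_const)
  have hHt_pos : ∀ y, 0 < Ht y := fun y => hH_pos _ (le_max_right _ _)
  have hHt_eq : ∀ y, 0 ≤ y → Ht y = H y := fun y hy => by
    simp [hHt_def, max_eq_left hy]
  have hinv_cont : Continuous fun y => 1 / Ht y :=
    continuous_const.div hHt_cont fun y => (hHt_pos y).ne'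
  -- the primitive `G`
  set G : ℝ → ℝ := fun x => ∫ y in (0:ℝ)..x, 1 / Ht y with hG_def
  have hG : ∀ x, HasDerivAt G (1 / Ht x) x := fun x =>
    (hinv_cont.integral_hasStrictDerivAt 0 x).hasDerivAt
  have hG_cont : Continuous G :=
    continuous_iff_continuousAt.mpr fun x => (hG x).continuousAt
  have hG_mono : StrictMono G := by
    apply strictMono_of_deriv_pos
    intro x
    rw [(hG x).deriv]
    exact div_pos one_pos (hHt_pos x)
  -- the product function u
  set u : ℝ → ℝ := fun r => h (w r) * l (z r) with hu_def
  have hh_d : Differentiable ℝ h := hh_diff.differentiable one_ne_zero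
  have hl_d : Differentiable ℝ l := hl_diff.differentiable one_ne_zero
  have hu' : ∀ r ∈ Ico (0:ℝ) T, HasDerivAt u
      (deriv h (w r) * f (w r) (z r) * l (z r) +
        h (w r) * (deriv l (z r) * g (w r) (z r))) r := by
    intro r hr
    exact ((hh_d (w r)).hasDerivAt.comp r (hw' r hr)).mul
      (((hl_d (z r)).hasDerivAt).comp r (hz' r hr))
  have hu_nonneg : ∀ r ∈ Ico (0:ℝ) T, 0 ≤ u r := fun r hr =>
    mul_nonneg (hh_nonneg _ (hnn r hr).1) (hl_nonneg _ (hnn r hr).2)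
  have hu_bound : ∀ r ∈ Ico (0:ℝ) T,
      deriv h (w r) * f (w r) (z r) * l (z r) +
        h (w r) * (deriv l (z r) * g (w r) (z r)) ≤ Ht (u r) := by
    intro r hr
    rw [hHt_eq _ (hu_nonneg r hr)]
    have := hineq (w r) (z r) (hnn r hr).1 (hnn r hr).2
    calc deriv h (w r) * f (w r) (z r) * l (z r) +
        h (w r) * (deriv l (z r) * g (w r) (z r))
        = f (w r) (z r) * deriv h (w r) * l (z r) +
          g (w r) (z r) * h (w r) * deriv l (z r) := by ring
      _ ≤ H (h (w r) * l (z r)) := this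
  have hsubT : ∀ r ∈ Icc (0:ℝ) t, r ∈ Ico (0:ℝ) T := fun r hr =>
    ⟨hr.1, lt_of_le_of_lt hr.2 htT⟩
  have hsubT' : ∀ r ∈ Ico (0:ℝ) t, r ∈ Ico (0:ℝ) T := fun r hr =>
    ⟨hr.1, hr.2.trans htT⟩
  -- continuity of s and u on [0, t]
  have hs_cont : ContinuousOn s (Icc (0:ℝ) t) := fun r hr =>
    ((hs' r hr.1).continuousAt).continuousWithinAt
  have hu_cont : ContinuousOn u (Icc (0:ℝ) t) := fun r hr =>
    ((hu' r (hsubT r hr)).continuousAt).continuousWithinAt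
  -- s stays ≥ s 0 ≥ 0 on [0, t]
  have hs0_nonneg : 0 ≤ s 0 := by
    rw [hs0]; exact mul_nonneg (hh_nonneg _ hc₁) (hl_nonneg _ hc₂)
  have hs_ge : ∀ r ∈ Icc (0:ℝ) t, s 0 ≤ s r := by
    have := image_le_of_deriv_right_lt_deriv_boundary'
      (f := fun _ : ℝ => s 0) (f' := fun _ => 0) (a := 0) (b := t)
      continuousOn_const (fun x _ => (hasDerivAt_const x (s 0)).hasDerivWithinAt)
      (B := s) (B' := fun r => H (s r)) le_rfl hs_cont
      (fun x hx => (hs' x hx.1).hasDerivWithinAt)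
      (fun x _ hx => by
        have : 0 ≤ s x := hx ▸ hs0_nonneg
        exact hH_pos _ this)
    exact fun r hr => this hr
  have hs_nonneg : ∀ r ∈ Icc (0:ℝ) t, 0 ≤ s r := fun r hr =>
    hs0_nonneg.trans (hs_ge r hr)
  -- G ∘ s equals G(s 0) + r  on [0, t]
  have hGs : ∀ r ∈ Icc (0:ℝ) t, G (s r) = G (s 0) + r := by
    have hconst : ∀ r ∈ Icc (0:ℝ) t, (fun r => G (s r) - r) r
        = (fun r => G (s r) - r) 0 := by
      apply constant_of_has_deriv_right_zero
      · exact ((hG_cont.comp_continuousOn hs_cont).sub continuousOn_id)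
      · intro x hx
        have hder : HasDerivAt (fun r => G (s r) - r)
            (1 / Ht (s x) * H (s x) - 1) x :=
          ((hG (s x)).comp x (hs' x hx.1)).sub (hasDerivAt_id x)
        have : 1 / Ht (s x) * H (s x) - 1 = 0 := by
          rw [hHt_eq _ (hs_nonneg x ⟨hx.1, hx.2.le⟩), one_div,
            inv_mul_cancel₀ (hH_pos _ (hs_nonneg x ⟨hx.1, hx.2.le⟩)).ne', sub_self]
        rw [this] at hder
        exact hder.hasDerivWithinAt
    intro r hr
    have := hconst r hr
    simp only [sub_zero] at this
    linarith [this]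
  -- G ∘ u is bounded by G(s 0) + r on [0, t]
  have hGu : ∀ r ∈ Icc (0:ℝ) t, G (u r) ≤ G (s 0) + r := by
    apply image_le_of_deriv_right_le_deriv_boundary
      (f := fun r => G (u r))
      (f' := fun r => 1 / Ht (u r) *
        (deriv h (w r) * f (w r) (z r) * l (z r) +
          h (w r) * (deriv l (z r) * g (w r) (z r))))
      (B := fun r => G (s 0) + r) (B' := fun _ => 1)
    · exact hG_cont.comp_continuousOn hu_cont
    · intro x hx
      exact (((hG (u x)).comp x (hu' x (hsubT' x hx)))).hasDerivWithinAt
    · have : u 0 = s 0 := by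
        simp only [hu_def, hw0, hz0, hs0]
      rw [this]; simp
    · exact continuousOn_const.add continuousOn_id
    · intro x _
      simpa using ((hasDerivAt_id' x).const_add (G (s 0))).hasDerivWithinAt
    · intro x hx
      rw [one_div, inv_mul_le_iff₀ (hHt_pos (u x)), mul_one]
      exact hu_bound x (hsubT' x hx)
  -- conclusion
  have h1 : G (u t) ≤ G (s 0) + t := hGu t ⟨ht0, le_rfl⟩
  have h2 : G (s t) = G (s 0) + t := hGs t ⟨ht0, le_rfl⟩
  have := h2 ▸ h1
  exact hG_mono.le_iff_le.mp this
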